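/- For any extended binary tree of height h with n leaves, let t_i denote the number of internal nodes at level i (0 ≤ i ≤ h−1); then t_i ≤ 2·t_{i−1} for 1 ≤ i ≤ h−1 and t_0 + t_1 + ⋯ + t_{h−1} = n − 1. Conversely, define the greedy sequence τ_0, …, τ_{h−1} for given n, h with h+1 ≤ n ≤ 2^h: starting from the unique tree with n = h+1 (τ_i = 1 for all i), repeatedly increment τ_k by 1 where k is the largest index with τ_k < 2τ_{k−1} (with τ_{-1} interpreted so τ_0 stays 1). Then for every valid sequence (t_i) with ∑ t_i = n − 1 and t_i ≤ 2t_{i−1}, t_0 = 1, and every 0 ≤ j ≤ h−1: τ_j + τ_{j+1} + ⋯ + τ_{h−1} ≥ t_j + t_{j+1} + ⋯ + t_{h−1}. In particular τ_{h−1} is the maximum possible number of internal nodes at level h−1, i.e., the greedy algorithm maximizes the number of leaves at level h. -/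

import Mathlib

/-- Extended binary trees: every node is a leaf or has exactly two children. -/
inductive XBT : Type
  | leaf : XBT
  | node : XBT → XBT → XBT

namespace XBT

/-- Height: length of the longest root-to-leaf path. -/
def height : XBT → ℕ
  | leaf => 0
  | node l r => 1 + max l.height r.height

/-- Number of leaves. -/
def numLeaves : XBT → ℕ
  | leaf => 1
  | node l r => l.numLeaves + r.numLeaves

/-- The number of internal nodes at level i. -/
def internAt : XBT → ℕ → ℕ
  | leaf, _ => 0
  | node _ _, 0 => 1
  | node l r, i + 1 => l.internAt i + r.internAt i

end XBT

/-- The index incremented by the greedy algorithm: the largest k with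
    τ_k < 2 τ_{k-1} (junk value 0 if there is none). -/
def greedyIdx (h : ℕ) (t : ℕ → ℕ) : ℕ :=
  WithBot.unbotD 0 (((Finset.Ico 1 h).filter fun i => t i < 2 * t (i - 1)).max)

/-- The greedy internal-node-count sequences: `greedySeq h m` is the sequence
    obtained from the all-ones sequence (the unique tree with n = h+1 leaves)
    after m greedy increments, i.e. the one for n = h + 1 + m leaves. -/
def greedySeq (h : ℕ) : ℕ → ℕ → ℕ
  | 0 => fun _ => 1
  | m + 1 =>
    Function.update (greedySeq h m) (greedyIdx h (greedySeq h m))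
      (greedySeq h m (greedyIdx h (greedySeq h m)) + 1)

namespace XBT

lemma numLeaves_pos (T : XBT) : 1 ≤ T.numLeaves := by
  induction T with
  | leaf => simp [numLeaves]
  | node l r ihl ihr => simp [numLeaves]; omega

lemma internAt_zero_le (T : XBT) : T.internAt 0 ≤ 1 := by
  cases T <;> simp [internAt]

lemma internAt_succ_le (T : XBT) : ∀ i, T.internAt (i + 1) ≤ 2 * T.internAt i := by
  induction T with
  | leaf => intro i; simp [internAt]
  | node l r ihl ihr =>
    intro i
    cases i with
    | zero =>
      have := internAt_zero_le l
      have := internAt_zero_le r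
      simp only [internAt]
      omega
    | succ i =>
      have := ihl i
      have := ihr i
      simp only [internAt]
      omega

lemma internAt_eq_zero (T : XBT) : ∀ i, T.height ≤ i → T.internAt i = 0 := by
  induction T with
  | leaf => intro i _; simp [internAt]
  | node l r ihl ihr =>
    intro i hi
    cases i with
    | zero => simp [height] at hi
    | succ i =>
      simp only [height] at hi
      have h1 : l.height ≤ i := by omega
      have h2 : r.height ≤ i := by omega
      simp only [internAt, ihl i h1, ihr i h2]

lemma sum_internAt (T : XBT) : ∀ n, T.height ≤ n →
    ∑ i ∈ Finset.range n, T.internAt i = T.numLeaves - 1 := by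
  induction T with
  | leaf => intro n _; simp [internAt, numLeaves]
  | node l r ihl ihr =>
    intro n hn
    simp only [height] at hn
    obtain ⟨n, rfl⟩ : ∃ m, n = m + 1 := ⟨n - 1, by omega⟩
    rw [Finset.sum_range_succ']
    have hl : ∑ i ∈ Finset.range n, l.internAt i = l.numLeaves - 1 := ihl n (by omega)
    have hr : ∑ i ∈ Finset.range n, r.internAt i = r.numLeaves - 1 := ihr n (by omega)
    simp only [internAt, Finset.sum_add_distrib, hl, hr, numLeaves]
    have := numLeaves_pos l
    have := numLeaves_pos r
    omega

end XBT

open Finset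

def Valid (h : ℕ) (t : ℕ → ℕ) : Prop :=
  t 0 = 1 ∧ (∀ i, 1 ≤ i → i < h → t i ≤ 2 * t (i - 1)) ∧ (∀ i, i < h → 1 ≤ t i)

lemma Valid.chain {h : ℕ} {t : ℕ → ℕ} (hv : Valid h t) :
    ∀ d a, a + d < h → t (a + d) ≤ 2 ^ d * t a := by
  intro d
  induction d with
  | zero => intro a _; simp
  | succ d ih =>
    intro a hb
    have h1 : t (a + d + 1) ≤ 2 * t (a + d) := by
      have := hv.2.1 (a + d + 1) (by omega) (by omega)
      simpa using this
    have h2 : t (a + d) ≤ 2 ^ d * t a := ih a (by omega)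
    have h3 : t (a + (d + 1)) = t (a + d + 1) := by ring_nf
    rw [h3]
    calc t (a + d + 1) ≤ 2 * t (a + d) := h1
      _ ≤ 2 * (2 ^ d * t a) := by omega
      _ = 2 ^ (d + 1) * t a := by ring

lemma pdiv_le' (a e c : ℕ) : (2 ^ (e + c) * a) / 2 ^ e = 2 ^ c * a := by
  rw [pow_add, mul_assoc, Nat.mul_div_cancel_left _ (Nat.two_pow_pos e)]

lemma pdiv_le (a d e : ℕ) (hde : e ≤ d) : (2 ^ d * a) / 2 ^ e = 2 ^ (d - e) * a := by
  rw [show d = e + (d - e) by omega]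
  rw [pdiv_le']
  simp [Nat.add_sub_cancel_left]

lemma pdiv_ge' (a d c : ℕ) : (2 ^ d * a) / 2 ^ (d + c) = a / 2 ^ c := by
  rw [pow_add, ← Nat.div_div_eq_div_mul,
    Nat.mul_div_cancel_left _ (Nat.two_pow_pos d)]

lemma pdiv_ge (a d e : ℕ) (hde : d ≤ e) : (2 ^ d * a) / 2 ^ e = a / 2 ^ (e - d) := by
  rw [show e = d + (e - d) by omega]
  rw [pdiv_ge']
  simp [Nat.add_sub_cancel_left]

lemma dec_div (B q : ℕ) (hB : 1 ≤ B) (hq : 1 ≤ q) : (B * q - 1) / B = q - 1 := by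
  obtain ⟨q, rfl⟩ : ∃ q', q = q' + 1 := ⟨q - 1, by omega⟩
  have h1 : B * (q + 1) - 1 = (B - 1) + B * q := by
    have e1 : B * (q + 1) = B * q + B := by ring
    omega
  rw [h1, Nat.add_mul_div_left _ _ (by omega : 0 < B), Nat.div_eq_of_lt (by omega)]
  omega

lemma sum_two_pow (n : ℕ) : ∑ i ∈ range n, 2 ^ i = 2 ^ n - 1 := by
  induction n with
  | zero => simp
  | succ n ih =>
    rw [Finset.sum_range_succ, ih]
    have h1 : (1:ℕ) ≤ 2 ^ n := Nat.one_le_two_pow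
    have h2 : (2:ℕ) ^ (n + 1) = 2 ^ n * 2 := pow_succ 2 n
    omega

lemma sum_geom_Ico (a b c : ℕ) : ∑ i ∈ Finset.Ico a b, 2 ^ (i - a) * c = (2 ^ (b - a) - 1) * c := by
  rw [Finset.sum_Ico_eq_sum_range]
  have h1 : ∀ i ∈ range (b - a), 2 ^ (a + i - a) * c = 2 ^ i * c := by
    intro i _; congr 2; omega
  rw [Finset.sum_congr rfl h1, ← Finset.sum_mul, sum_two_pow]

lemma sum_update_succ {s : Finset ℕ} {f : ℕ → ℕ} {i : ℕ} (hi : i ∈ s) :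
    ∑ x ∈ s, Function.update f i (f i + 1) x = (∑ x ∈ s, f x) + 1 := by
  rw [Finset.sum_update_of_mem hi]
  have := Finset.sum_eq_sum_sdiff_singleton_add hi f
  omega

lemma sum_update_pred {s : Finset ℕ} {f : ℕ → ℕ} {i : ℕ} (hi : i ∈ s) (hf : 1 ≤ f i) :
    (∑ x ∈ s, Function.update f i (f i - 1) x) + 1 = ∑ x ∈ s, f x := by
  rw [Finset.sum_update_of_mem hi]
  have := Finset.sum_eq_sum_sdiff_singleton_add hi f
  omega

lemma sat_pow {h : ℕ} {τ : ℕ → ℕ} {k : ℕ}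
    (hsat : ∀ u, k < u → u < h → τ u = 2 * τ (u - 1)) :
    ∀ u, k ≤ u → u < h → τ u = 2 ^ (u - k) * τ k := by
  intro u
  induction u with
  | zero =>
    intro h1 _
    obtain rfl : k = 0 := Nat.le_zero.mp h1
    norm_num
  | succ u ih =>
    intro h1 h2
    rcases Nat.eq_or_lt_of_le h1 with heq | hlt
    · rw [← heq]; simp
    · have hu : k ≤ u := by omega
      have := hsat (u + 1) (by omega) h2
      rw [this]
      simp only [Nat.add_sub_cancel]
      rw [ih hu (by omega), show u + 1 - k = (u - k) + 1 by omega, pow_succ]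
      ring

lemma greedyIdx_eq_max' {h : ℕ} {t : ℕ → ℕ}
    (hne : ((Finset.Ico 1 h).filter fun i => t i < 2 * t (i - 1)).Nonempty) :
    greedyIdx h t = ((Finset.Ico 1 h).filter fun i => t i < 2 * t (i - 1)).max' hne := by
  unfold greedyIdx
  rw [← Finset.coe_max' hne]
  rfl

lemma F_nonempty {h : ℕ} {τ : ℕ → ℕ} (hv : Valid h τ)
    (hsum : (∑ i ∈ range h, τ i) + 2 ≤ 2 ^ h) :
    ((Finset.Ico 1 h).filter fun i => τ i < 2 * τ (i - 1)).Nonempty := by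
  by_contra hF
  rw [Finset.not_nonempty_iff_eq_empty, Finset.filter_eq_empty_iff] at hF
  have hpow : ∀ i, i < h → τ i = 2 ^ i := by
    intro i
    induction i with
    | zero => intro _; simpa using hv.1
    | succ i ih =>
      intro hih
      have h1 : τ (i + 1) ≤ 2 * τ i := by
        have := hv.2.1 (i + 1) (by omega) hih
        simpa using this
      have h2 : ¬ (τ (i + 1) < 2 * τ (i + 1 - 1)) := hF (by simp; omega)
      simp only [Nat.add_sub_cancel] at h2
      rw [ih (by omega)] at h1 h2
      rw [pow_succ]
      omega
  have : ∑ i ∈ range h, τ i = 2 ^ h - 1 := by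
    rw [Finset.sum_congr rfl fun i hi => hpow i (Finset.mem_range.mp hi), sum_two_pow]
  have : (1:ℕ) ≤ 2 ^ h := Nat.one_le_two_pow
  omega

def P (τ : ℕ → ℕ) (k : ℕ) : Prop :=
  ∑ i ∈ range k, τ i ≤ k + ∑ i ∈ range k, τ k / 2 ^ (k - i)

lemma idx_mem {h : ℕ} {τ : ℕ → ℕ}
    (hne : ((Finset.Ico 1 h).filter fun i => τ i < 2 * τ (i - 1)).Nonempty) :
    1 ≤ greedyIdx h τ ∧ greedyIdx h τ < h ∧
      τ (greedyIdx h τ) < 2 * τ (greedyIdx h τ - 1) := by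
  have hidx := greedyIdx_eq_max' hne
  have hmem := Finset.max'_mem _ hne
  rw [← hidx] at hmem
  rw [Finset.mem_filter, Finset.mem_Ico] at hmem
  exact ⟨hmem.1.1, hmem.1.2, hmem.2⟩

lemma idx_max {h : ℕ} {τ : ℕ → ℕ}
    (hne : ((Finset.Ico 1 h).filter fun i => τ i < 2 * τ (i - 1)).Nonempty) :
    ∀ i ∈ (Finset.Ico 1 h).filter fun i => τ i < 2 * τ (i - 1), i ≤ greedyIdx h τ := by
  intro i hi
  have := Finset.le_max' _ i hi
  rw [← greedyIdx_eq_max' hne] at this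
  exact this

lemma idx_sat {h : ℕ} {τ : ℕ → ℕ} (hv : Valid h τ)
    (hne : ((Finset.Ico 1 h).filter fun i => τ i < 2 * τ (i - 1)).Nonempty) :
    ∀ u, greedyIdx h τ < u → u < h → τ u = 2 * τ (u - 1) := by
  intro u h1 h2
  have h0 : 1 ≤ greedyIdx h τ := (idx_mem hne).1
  have hnotmem : u ∉ (Finset.Ico 1 h).filter fun i => τ i < 2 * τ (i - 1) := by
    intro hin
    have := idx_max hne u hin
    omega
  rw [Finset.mem_filter, Finset.mem_Ico] at hnotmem
  push_neg at hnotmem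
  have h3 := hnotmem ⟨by omega, h2⟩
  have h4 := hv.2.1 u (by omega) h2
  omega

lemma valid_step {h : ℕ} {τ : ℕ → ℕ} {k : ℕ} (hv : Valid h τ) (hk1 : 1 ≤ k) (hkh : k < h)
    (hks : τ k < 2 * τ (k - 1)) :
    Valid h (Function.update τ k (τ k + 1)) := by
  set τ' := Function.update τ k (τ k + 1) with hτ'
  have upd_ne : ∀ i, i ≠ k → τ' i = τ i := by
    intro i hi; rw [hτ']; exact Function.update_of_ne hi _ _
  have upd_eq : τ' k = τ k + 1 := by rw [hτ']; exact Function.update_self _ _ _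
  refine ⟨?_, ?_, ?_⟩
  · rw [upd_ne 0 (by omega)]; exact hv.1
  · intro i hi1 hih
    by_cases hik : i = k
    · subst hik
      rw [upd_eq, upd_ne (i - 1) (by omega)]
      omega
    · by_cases hik1 : i = k + 1
      · subst hik1
        rw [upd_ne (k + 1) (by omega), show k + 1 - 1 = k by omega, upd_eq]
        have h5 := hv.2.1 (k + 1) (by omega) hih
        rw [show k + 1 - 1 = k by omega] at h5
        omega
      · rw [upd_ne i hik, upd_ne (i - 1) (by omega)]
        exact hv.2.1 i hi1 hih
  · intro i hih
    by_cases hik : i = k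
    · subst hik; rw [upd_eq]; omega
    · rw [upd_ne i hik]; exact hv.2.2 i hih

lemma P_step {h : ℕ} {τ : ℕ → ℕ} {k : ℕ} (hv : Valid h τ) (hk1 : 1 ≤ k) (hkh : k < h)
    (hks : τ k < 2 * τ (k - 1)) (hsat : ∀ u, k < u → u < h → τ u = 2 * τ (u - 1))
    (hP : P τ k) :
    P (Function.update τ k (τ k + 1)) (greedyIdx h (Function.update τ k (τ k + 1))) := by
  set τ' := Function.update τ k (τ k + 1) with hτ'
  have upd_ne : ∀ i, i ≠ k → τ' i = τ i := by
    intro i hi; rw [hτ']; exact Function.update_of_ne hi _ _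
  have upd_eq : τ' k = τ k + 1 := by rw [hτ']; exact Function.update_self _ _ _
  have hv' : Valid h τ' := valid_step hv hk1 hkh hks
  have hpos := hv.2.2
  unfold P at hP ⊢
  by_cases hcase : k + 1 < h
  · -- new index is k + 1
    have hsatk1 : τ (k + 1) = 2 * τ k := by
      have := hsat (k + 1) (by omega) hcase
      rw [show k + 1 - 1 = k by omega] at this
      exact this
    have hk1mem : k + 1 ∈ (Finset.Ico 1 h).filter fun i => τ' i < 2 * τ' (i - 1) := by
      rw [Finset.mem_filter, Finset.mem_Ico]
      refine ⟨⟨by omega, hcase⟩, ?_⟩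
      rw [show k + 1 - 1 = k by omega, upd_ne (k + 1) (by omega), upd_eq, hsatk1]
      omega
    have hne' : ((Finset.Ico 1 h).filter fun i => τ' i < 2 * τ' (i - 1)).Nonempty :=
      ⟨k + 1, hk1mem⟩
    have hidx' : greedyIdx h τ' = k + 1 := by
      rw [greedyIdx_eq_max' hne']
      apply le_antisymm
      · apply Finset.max'_le
        intro i hi
        by_contra hcon
        push_neg at hcon
        rw [Finset.mem_filter, Finset.mem_Ico] at hi
        have e1 : τ' i = τ i := upd_ne i (by omega)
        have e2 : τ' (i - 1) = τ (i - 1) := upd_ne (i - 1) (by omega)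
        have e3 := hsat i (by omega) hi.1.2
        rw [e1, e2] at hi
        omega
      · exact Finset.le_max' _ _ hk1mem
    rw [hidx']
    have hLHS : ∑ i ∈ range (k + 1), τ' i = (∑ i ∈ range k, τ i) + (τ k + 1) := by
      rw [Finset.sum_range_succ, upd_eq]
      congr 1
      refine Finset.sum_congr rfl fun i hi => ?_
      rw [Finset.mem_range] at hi
      exact upd_ne i (by omega)
    have hval : τ' (k + 1) = 2 ^ 1 * τ k := by
      rw [upd_ne (k + 1) (by omega), hsatk1]; ring
    have hRHS : ∑ i ∈ range (k + 1), τ' (k + 1) / 2 ^ (k + 1 - i)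
        = (∑ i ∈ range k, τ k / 2 ^ (k - i)) + τ k := by
      rw [Finset.sum_range_succ]
      congr 1
      · refine Finset.sum_congr rfl fun i hi => ?_
        rw [Finset.mem_range] at hi
        rw [hval, pdiv_ge _ 1 (k + 1 - i) (by omega), show k + 1 - i - 1 = k - i by omega]
      · rw [hval, show k + 1 - k = 1 by omega, pdiv_le _ 1 1 (le_refl 1)]
        simp
    rw [hLHS, hRHS]
    omega
  · -- k = h - 1
    have hktop : k + 1 = h := by omega
    by_cases hne' : ((Finset.Ico 1 h).filter fun i => τ' i < 2 * τ' (i - 1)).Nonempty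
    · obtain ⟨hk'1, hk'h, hk's⟩ := idx_mem hne'
      set k' := greedyIdx h τ' with hk'def
      by_cases hk'k : k' = k
      · rw [hk'k]
        have hLHS : ∑ i ∈ range k, τ' i = ∑ i ∈ range k, τ i := by
          refine Finset.sum_congr rfl fun i hi => ?_
          rw [Finset.mem_range] at hi
          exact upd_ne i (by omega)
        rw [hLHS]
        refine le_trans hP (Nat.add_le_add_left (Finset.sum_le_sum fun i _ => ?_) k)
        rw [upd_eq]
        exact Nat.div_le_div_right (by omega)
      · have hk'lt : k' < k := by omega
        have hsat' : ∀ u, k' < u → u < h → τ' u = 2 * τ' (u - 1) :=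
          idx_sat hv' hne'
        have spow := sat_pow hsat'
        have hTpos : 1 ≤ τ k' := hpos k' (by omega)
        have hτ'k' : τ' k' = τ k' := upd_ne k' hk'k
        set T := τ k' with hT
        set d := k - k' with hd
        have hd1 : 1 ≤ d := by omega
        have hdk : k' + d = k := by omega
        have key1 : τ k + 1 = 2 ^ d * T := by
          have := spow k (by omega) (by omega)
          rw [upd_eq, hτ'k'] at this
          exact this
        have key2 : ∀ u, k' ≤ u → u < k → τ u = 2 ^ (u - k') * T := by
          intro u h1 h2
          have := spow u h1 (by omega)
          rw [hτ'k'] at this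
          rw [← upd_ne u (by omega), this]
        have hτk : τ k = 2 ^ d * T - 1 := by omega
        have hLHS : ∑ i ∈ range k', τ' i = ∑ i ∈ range k', τ i := by
          refine Finset.sum_congr rfl fun i hi => ?_
          rw [Finset.mem_range] at hi
          exact upd_ne i (by omega)
        rw [hLHS, hτ'k']
        -- split hP at k'
        have hsplitL : ∑ i ∈ range k, τ i
            = (∑ i ∈ range k', τ i) + ∑ i ∈ Finset.Ico k' k, τ i := by
          simp only [Finset.range_eq_Ico]
          exact (Finset.sum_Ico_consecutive τ (Nat.zero_le k') (by omega)).symm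
        have hmid : ∑ i ∈ Finset.Ico k' k, τ i = (2 ^ d - 1) * T := by
          rw [← sum_geom_Ico k' k T]
          refine Finset.sum_congr rfl fun i hi => ?_
          rw [Finset.mem_Ico] at hi
          exact key2 i hi.1 hi.2
        have hsplitR : ∑ i ∈ range k, τ k / 2 ^ (k - i)
            = (∑ i ∈ range k', τ k / 2 ^ (k - i))
              + ∑ i ∈ Finset.Ico k' k, τ k / 2 ^ (k - i) := by
          simp only [Finset.range_eq_Ico]
          exact (Finset.sum_Ico_consecutive _ (Nat.zero_le k') (by omega)).symm
        have e1 : ∀ i ∈ Finset.Ico k' k, τ k / 2 ^ (k - i) = 2 ^ (i - k') * T - 1 := by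
          intro i hi
          rw [Finset.mem_Ico] at hi
          have epow : (2:ℕ) ^ d * T = 2 ^ (k - i) * (2 ^ (i - k') * T) := by
            rw [← mul_assoc, ← pow_add]
            congr 2
            omega
          have hq : 1 ≤ 2 ^ (i - k') * T :=
            Nat.one_le_iff_ne_zero.mpr (Nat.mul_ne_zero (by positivity) (by omega))
          rw [hτk, epow, dec_div _ _ Nat.one_le_two_pow hq]
        have hmidR : (∑ i ∈ Finset.Ico k' k, τ k / 2 ^ (k - i)) + d = (2 ^ d - 1) * T := by
          rw [Finset.sum_congr rfl e1]
          have e2 : ∑ i ∈ Finset.Ico k' k, 2 ^ (i - k') * T = (2 ^ d - 1) * T :=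
            sum_geom_Ico k' k T
          have e3 : ∑ i ∈ Finset.Ico k' k, (2 ^ (i - k') * T - 1 + 1)
              = (∑ i ∈ Finset.Ico k' k, (2 ^ (i - k') * T - 1)) + d := by
            rw [Finset.sum_add_distrib, Finset.sum_const, Nat.card_Ico, smul_eq_mul, mul_one,
              ← hd]
          have e4 : ∑ i ∈ Finset.Ico k' k, (2 ^ (i - k') * T - 1 + 1)
              = ∑ i ∈ Finset.Ico k' k, 2 ^ (i - k') * T := by
            refine Finset.sum_congr rfl fun i hi => ?_
            have hq : 1 ≤ 2 ^ (i - k') * T :=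
              Nat.one_le_iff_ne_zero.mpr (Nat.mul_ne_zero (by positivity) (by omega))
            omega
          omega
        have hS0 : (∑ i ∈ range k', τ k / 2 ^ (k - i)) ≤ ∑ i ∈ range k', T / 2 ^ (k' - i) := by
          refine Finset.sum_le_sum fun i hi => ?_
          rw [Finset.mem_range] at hi
          have e5 : (2:ℕ) ^ d * T / 2 ^ (k - i) = T / 2 ^ (k' - i) := by
            rw [pdiv_ge _ d (k - i) (by omega), show k - i - d = k' - i by omega]
          calc τ k / 2 ^ (k - i) ≤ 2 ^ d * T / 2 ^ (k - i) :=
                Nat.div_le_div_right (by omega)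
            _ = T / 2 ^ (k' - i) := e5
        omega
    · rw [Finset.not_nonempty_iff_eq_empty] at hne'
      have h0 : greedyIdx h τ' = 0 := by
        unfold greedyIdx
        rw [hne', Finset.max_empty]
        rfl
      rw [h0]
      simp

def Good (h m : ℕ) : Prop :=
  Valid h (greedySeq h m) ∧ (∑ i ∈ range h, greedySeq h m i = h + m) ∧
    P (greedySeq h m) (greedyIdx h (greedySeq h m))

lemma good_zero (h : ℕ) : Good h 0 := by
  refine ⟨⟨rfl, fun i _ _ => by simp [greedySeq], fun i _ => by simp [greedySeq]⟩, ?_, ?_⟩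
  · simp [greedySeq]
  · unfold P
    simp [greedySeq]

lemma greedy_step_eq (h m : ℕ) :
    greedySeq h (m + 1) = Function.update (greedySeq h m) (greedyIdx h (greedySeq h m))
      (greedySeq h m (greedyIdx h (greedySeq h m)) + 1) := rfl

lemma good_succ {h m : ℕ} (hG : Good h m) (hbound : h + m + 2 ≤ 2 ^ h) : Good h (m + 1) := by
  have hne : ((Finset.Ico 1 h).filter fun i => greedySeq h m i
      < 2 * greedySeq h m (i - 1)).Nonempty :=
    F_nonempty hG.1 (by rw [hG.2.1]; omega)
  obtain ⟨hk1, hkh, hks⟩ := idx_mem hne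
  have hsat := idx_sat hG.1 hne
  unfold Good
  rw [greedy_step_eq h m]
  refine ⟨valid_step hG.1 hk1 hkh hks, ?_, P_step hG.1 hk1 hkh hks hsat hG.2.2⟩
  rw [sum_update_succ (Finset.mem_range.mpr hkh), hG.2.1]
  omega

lemma good_of_le (h : ℕ) : ∀ m, h + m + 1 ≤ 2 ^ h → Good h m := by
  intro m
  induction m with
  | zero => intro _; exact good_zero h
  | succ m ih =>
    intro hm
    exact good_succ (ih (by omega)) (by omega)

lemma all_one {h : ℕ} {t : ℕ → ℕ} (hpos : ∀ i, i < h → 1 ≤ t i)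
    (hsum : ∑ i ∈ range h, t i = h) : ∀ i, i < h → t i = 1 := by
  by_contra hcon
  push_neg at hcon
  obtain ⟨i0, hi0, hne⟩ := hcon
  have h2 : 2 ≤ t i0 := by have := hpos i0 hi0; omega
  have : ∑ i ∈ range h, (1:ℕ) < ∑ i ∈ range h, t i := by
    refine Finset.sum_lt_sum (fun i hi => hpos i (Finset.mem_range.mp hi)) ?_
    exact ⟨i0, Finset.mem_range.mpr hi0, by omega⟩
  simp at this
  omega

lemma valid_dec {h : ℕ} {t : ℕ → ℕ} {ℓ : ℕ} (hv : Valid h t) (hl1 : 1 ≤ ℓ) (hlh : ℓ < h)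
    (hl2 : 2 ≤ t ℓ) (htop : ∀ i, ℓ < i → i < h → t i = 1) :
    Valid h (Function.update t ℓ (t ℓ - 1)) := by
  set t' := Function.update t ℓ (t ℓ - 1) with ht'
  have upd_ne : ∀ i, i ≠ ℓ → t' i = t i := by
    intro i hi; rw [ht']; exact Function.update_of_ne hi _ _
  have upd_eq : t' ℓ = t ℓ - 1 := by rw [ht']; exact Function.update_self _ _ _
  refine ⟨?_, ?_, ?_⟩
  · rw [upd_ne 0 (by omega)]; exact hv.1
  · intro i hi1 hih
    by_cases hik : i = ℓ
    · subst hik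
      rw [upd_eq, upd_ne (i - 1) (by omega)]
      have := hv.2.1 i hi1 hih
      omega
    · by_cases hik1 : i = ℓ + 1
      · subst hik1
        rw [upd_ne (ℓ + 1) (by omega), show ℓ + 1 - 1 = ℓ by omega, upd_eq,
          htop (ℓ + 1) (by omega) hih]
        omega
      · rw [upd_ne i hik, upd_ne (i - 1) (by omega)]
        exact hv.2.1 i hi1 hih
  · intro i hih
    by_cases hik : i = ℓ
    · subst hik; rw [upd_eq]; omega
    · rw [upd_ne i hik]; exact hv.2.2 i hih

/-- The crux: if τ is saturated above k and satisfies the minimal-head invariant P,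
    then any valid sequence with one more unit of total sum has tail sums
    (from any j > k) at most those of τ. -/
lemma tail_le_of_gt {h : ℕ} {τ t : ℕ → ℕ} {k j N : ℕ}
    (hvt : Valid h t)
    (hsat : ∀ u, k < u → u < h → τ u = 2 * τ (u - 1))
    (hP : P τ k)
    (hsumτ : ∑ i ∈ range h, τ i = N) (hsumt : ∑ i ∈ range h, t i = N + 1)
    (hkj : k < j) (hjh : j < h) :
    ∑ i ∈ Finset.Ico j h, t i ≤ ∑ i ∈ Finset.Ico j h, τ i := by
  have spow := sat_pow hsat
  by_cases hvw : t j ≤ τ j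
  · refine Finset.sum_le_sum fun i hi => ?_
    rw [Finset.mem_Ico] at hi
    have c1 : t i ≤ 2 ^ (i - j) * t j := by
      have := hvt.chain (i - j) j (by omega)
      rw [show j + (i - j) = i by omega] at this
      exact this
    have c2 : τ i = 2 ^ (i - j) * τ j := by
      rw [spow i (by omega) hi.2, spow j (by omega) hjh, ← mul_assoc, ← pow_add]
      congr 2
      omega
    calc t i ≤ 2 ^ (i - j) * t j := c1
      _ ≤ 2 ^ (i - j) * τ j := Nat.mul_le_mul_left _ hvw
      _ = τ i := c2.symm
  · push_neg at hvw
    have hhead : ∀ i, i < j → τ j / 2 ^ (j - i) + 1 ≤ t i := by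
      intro i hij
      have c1 : t j ≤ 2 ^ (j - i) * t i := by
        have := hvt.chain (j - i) i (by omega)
        rw [show i + (j - i) = j by omega] at this
        exact this
      have c2 : τ j < t i * 2 ^ (j - i) := by
        have := mul_comm (2 ^ (j - i)) (t i)
        omega
      have := (Nat.div_lt_iff_lt_mul (Nat.two_pow_pos (j - i))).mpr c2
      omega
    have hHsum : (∑ i ∈ range j, (τ j / 2 ^ (j - i) + 1)) ≤ ∑ i ∈ range j, t i :=
      Finset.sum_le_sum fun i hi => hhead i (Finset.mem_range.mp hi)
    have hsplit1 : ∑ i ∈ range j, (τ j / 2 ^ (j - i) + 1)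
        = (∑ i ∈ range j, τ j / 2 ^ (j - i)) + j := by
      rw [Finset.sum_add_distrib, Finset.sum_const, Finset.card_range, smul_eq_mul, mul_one]
    have hsplitF : ∑ i ∈ range j, τ j / 2 ^ (j - i)
        = (∑ i ∈ range k, τ j / 2 ^ (j - i)) + ∑ i ∈ Finset.Ico k j, τ j / 2 ^ (j - i) := by
      simp only [Finset.range_eq_Ico]
      exact (Finset.sum_Ico_consecutive _ (Nat.zero_le k) (by omega)).symm
    have hFlow : ∑ i ∈ range k, τ j / 2 ^ (j - i) = ∑ i ∈ range k, τ k / 2 ^ (k - i) := by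
      refine Finset.sum_congr rfl fun i hi => ?_
      rw [Finset.mem_range] at hi
      rw [spow j (by omega) hjh, pdiv_ge _ (j - k) (j - i) (by omega),
        show j - i - (j - k) = k - i by omega]
    have hFmid : ∑ i ∈ Finset.Ico k j, τ j / 2 ^ (j - i) = ∑ i ∈ Finset.Ico k j, τ i := by
      refine Finset.sum_congr rfl fun i hi => ?_
      rw [Finset.mem_Ico] at hi
      rw [spow j (by omega) hjh, pdiv_le _ (j - k) (j - i) (by omega),
        show j - k - (j - i) = i - k by omega, ← spow i (by omega) (by omega)]
    have hsplitτ : (∑ i ∈ range k, τ i) + (∑ i ∈ Finset.Ico k j, τ i)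
        + ∑ i ∈ Finset.Ico j h, τ i = N := by
      rw [← hsumτ]
      simp only [Finset.range_eq_Ico]
      rw [Finset.sum_Ico_consecutive τ (Nat.zero_le k) (by omega : k ≤ j),
        Finset.sum_Ico_consecutive τ (Nat.zero_le j) (by omega : j ≤ h)]
    have hsplitt : (∑ i ∈ range j, t i) + ∑ i ∈ Finset.Ico j h, t i = N + 1 := by
      rw [← hsumt]
      simp only [Finset.range_eq_Ico]
      rw [Finset.sum_Ico_consecutive t (Nat.zero_le j) (by omega : j ≤ h)]
    unfold P at hP
    omega

lemma dom (h : ℕ) : ∀ m, h + m + 1 ≤ 2 ^ h → ∀ t : ℕ → ℕ, Valid h t →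
    (∑ i ∈ range h, t i = h + m) → ∀ j, j < h →
    ∑ i ∈ Finset.Ico j h, t i ≤ ∑ i ∈ Finset.Ico j h, greedySeq h m i := by
  intro m
  induction m with
  | zero =>
    intro _ t hv hsum j hj
    have h1 := all_one hv.2.2 (by omega)
    refine Finset.sum_le_sum fun i hi => ?_
    rw [Finset.mem_Ico] at hi
    rw [h1 i hi.2]
    simp [greedySeq]
  | succ m ih =>
    intro hm t hv hsum j hj
    have hG : Good h m := good_of_le h m (by omega)
    have hne := F_nonempty hG.1 (by rw [hG.2.1]; omega)
    obtain ⟨hk1, hkh, hks⟩ := idx_mem hne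
    have hsat := idx_sat hG.1 hne
    by_cases hjk : greedyIdx h (greedySeq h m) < j
    · -- crux case : tail sums above the greedy index cannot grow
      have hstep : ∑ i ∈ Finset.Ico j h, greedySeq h m i
          ≤ ∑ i ∈ Finset.Ico j h, greedySeq h (m + 1) i := by
        rw [greedy_step_eq h m]
        refine Finset.sum_le_sum fun i hi => ?_
        by_cases hik : i = greedyIdx h (greedySeq h m)
        · subst hik; rw [Function.update_self]; omega
        · rw [Function.update_of_ne hik]
      refine le_trans ?_ hstep
      exact tail_le_of_gt hv hsat hG.2.2 hG.2.1 (by omega) hjk hj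
    · -- decrement case
      push_neg at hjk
      -- find the largest index with t ℓ ≥ 2
      have hex : ((range h).filter fun i => 2 ≤ t i).Nonempty := by
        by_contra hcon
        rw [Finset.not_nonempty_iff_eq_empty, Finset.filter_eq_empty_iff] at hcon
        have : ∀ i ∈ range h, t i = 1 := by
          intro i hi
          have h1 := hcon hi
          have h2 := hv.2.2 i (Finset.mem_range.mp hi)
          omega
        rw [Finset.sum_congr rfl this] at hsum
        simp at hsum
      set ℓ := (((range h).filter fun i => 2 ≤ t i).max' hex) with hℓ
      have hℓmem := Finset.max'_mem _ hex
      rw [← hℓ, Finset.mem_filter, Finset.mem_range] at hℓmem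
      obtain ⟨hℓh, hℓ2⟩ := hℓmem
      have hℓ1 : 1 ≤ ℓ := by
        rcases Nat.eq_zero_or_pos ℓ with h0 | h1
        · rw [h0] at hℓ2; rw [hv.1] at hℓ2; omega
        · exact h1
      have htop : ∀ i, ℓ < i → i < h → t i = 1 := by
        intro i h1 h2
        by_contra hcon
        have h3 := hv.2.2 i h2
        have : i ∈ (range h).filter fun i => 2 ≤ t i := by
          rw [Finset.mem_filter, Finset.mem_range]
          exact ⟨h2, by omega⟩
        have := Finset.le_max' _ i this
        rw [← hℓ] at this
        omega
      have hv' : Valid h (Function.update t ℓ (t ℓ - 1)) := valid_dec hv hℓ1 hℓh hℓ2 htop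
      have hsum' : ∑ i ∈ range h, Function.update t ℓ (t ℓ - 1) i = h + m := by
        have := sum_update_pred (Finset.mem_range.mpr hℓh) (f := t) (by omega : 1 ≤ t ℓ)
        omega
      have hih := ih (by omega) _ hv' hsum' j hj
      have hdec : ∑ i ∈ Finset.Ico j h, t i
          ≤ (∑ i ∈ Finset.Ico j h, Function.update t ℓ (t ℓ - 1) i) + 1 := by
        by_cases hmem : ℓ ∈ Finset.Ico j h
        · have := sum_update_pred hmem (f := t) (by omega : 1 ≤ t ℓ)
          omega
        · have : ∑ i ∈ Finset.Ico j h, Function.update t ℓ (t ℓ - 1) i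
              = ∑ i ∈ Finset.Ico j h, t i := by
            refine Finset.sum_congr rfl fun i hi => ?_
            exact Function.update_of_ne (by rintro rfl; exact hmem hi) _ _
          omega
      have hgrow : ∑ i ∈ Finset.Ico j h, greedySeq h (m + 1) i
          = (∑ i ∈ Finset.Ico j h, greedySeq h m i) + 1 := by
        rw [greedy_step_eq h m]
        exact sum_update_succ (by rw [Finset.mem_Ico]; omega)
      omega

/-- (1) For any extended binary tree of height h (≥ 1) with n leaves, the level
    counts t_i of internal nodes satisfy t_i ≤ 2 t_{i-1} for 1 ≤ i ≤ h-1 and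
    t_0 + ⋯ + t_{h-1} = n - 1.  (2) Conversely, for h+1 ≤ n ≤ 2^h and any valid
    sequence (t_i) (t_0 = 1, positive, t_i ≤ 2 t_{i-1}, summing to n - 1), the
    greedy sequence τ for n, h dominates all its tail sums:
    t_j + ⋯ + t_{h-1} ≤ τ_j + ⋯ + τ_{h-1} for every 0 ≤ j ≤ h-1; in particular
    (j = h-1) the greedy algorithm maximizes the number of internal nodes at
    level h-1, i.e. the number of leaves at level h. -/
theorem greedy_code_optimal (h : ℕ) (hh : 1 ≤ h) :
    (∀ T : XBT, T.height = h →
      (∀ i, 1 ≤ i → i ≤ h - 1 → T.internAt i ≤ 2 * T.internAt (i - 1)) ∧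
        ∑ i ∈ Finset.range h, T.internAt i = T.numLeaves - 1) ∧
    (∀ n, h + 1 ≤ n → n ≤ 2 ^ h → ∀ t : ℕ → ℕ, t 0 = 1 →
      (∀ i, 1 ≤ i → i ≤ h - 1 → t i ≤ 2 * t (i - 1)) →
      (∀ i, i < h → 1 ≤ t i) →
      (∑ i ∈ Finset.range h, t i = n - 1) →
      ∀ j, j ≤ h - 1 →
        ∑ i ∈ Finset.Icc j (h - 1), t i
          ≤ ∑ i ∈ Finset.Icc j (h - 1), greedySeq h (n - (h + 1)) i) := by
  constructor
  · intro T hT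
    constructor
    · intro i h1 h2
      have := XBT.internAt_succ_le T (i - 1)
      rw [show i - 1 + 1 = i by omega] at this
      exact this
    · rw [← hT]
      exact XBT.sum_internAt T T.height le_rfl
  · intro n hn1 hn2 t ht0 hconstr hpos hsum j hj
    have hv : Valid h t := ⟨ht0, fun i h1 h2 => hconstr i h1 (by omega), hpos⟩
    have hm : h + (n - (h + 1)) + 1 ≤ 2 ^ h := by omega
    have hsum' : ∑ i ∈ Finset.range h, t i = h + (n - (h + 1)) := by omega
    have hIcc : Finset.Icc j (h - 1) = Finset.Ico j h := by
      rw [← Finset.Ico_add_one_right_eq_Icc, show h - 1 + 1 = h by omega]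
    rw [hIcc]
    exact dom h (n - (h + 1)) hm t hv hsum' j (by omega)
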